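/- Let n > 1 and l ≥ 1 be integers. Then there exist a function f : ℝⁿ → ℝˡ in 1-AC(ℝⁿ,ℝˡ) which is differentiable almost everywhere, and a set U ⊆ ℝⁿ with ℒⁿ(U) = 0 and ℒˡ(f(U)) > 0. In particular f does not have the Luzin (N) property. -/

import Mathlib

open MeasureTheory Metric Set Filter
open scoped ENNReal Pointwise

noncomputable section

/-- The closed interval (box) `[a,b]` in `ℝⁿ`. -/
def box {n : ℕ} (a b : EuclideanSpace ℝ (Fin n)) : Set (EuclideanSpace ℝ (Fin n)) :=
  {x | ∀ ν, a ν ≤ x ν ∧ x ν ≤ b ν}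

/-- `f` is 1-absolutely continuous on `ℝⁿ`: for every `ε > 0` there is `δ > 0` such that
for every finite collection of pairwise disjoint 1-regular intervals (cubes)
`[aᵢ,bᵢ] ⊆ ℝⁿ`, `∑ ℒⁿ([aᵢ,bᵢ]) < δ` implies `∑ |f(bᵢ) − f(aᵢ)|ⁿ < ε`. -/
def OneAC {n l : ℕ} (f : EuclideanSpace ℝ (Fin n) → EuclideanSpace ℝ (Fin l)) : Prop :=
  ∀ ε > 0, ∃ δ > 0, ∀ (k : ℕ) (a b : Fin k → EuclideanSpace ℝ (Fin n)),
    (∀ i, ∀ ν, a i ν ≤ b i ν) →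
    (Pairwise fun i j => Disjoint (box (a i) (b i)) (box (a j) (b j))) →
    (∀ i, (⨆ ν, |a i ν - b i ν|) ^ n ≤ (volume (box (a i) (b i))).toReal) →
    ∑ i, (volume (box (a i) (b i))).toReal < δ →
    ∑ i, ‖f (b i) - f (a i)‖ ^ n < ε


lemma volume_preCantorSet (n : ℕ) : volume (preCantorSet n) ≤ (2/3 : ℝ≥0∞) ^ n := by
  induction n with
  | zero => simp [preCantorSet, Real.volume_Icc]
  | succ n ih =>
    have h1 : volume ((· / 3) '' preCantorSet n) ≤ (3 : ℝ≥0∞)⁻¹ * (2/3 : ℝ≥0∞) ^ n := by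
      have : (· / 3) '' preCantorSet n = (3 : ℝ)⁻¹ • preCantorSet n := by
        ext x; simp [Set.mem_smul_set, div_eq_inv_mul, mul_comm]
      rw [this, Measure.addHaar_smul]
      simp only [Module.finrank_self, pow_one]
      calc ENNReal.ofReal |(3:ℝ)⁻¹| * volume (preCantorSet n)
          ≤ ENNReal.ofReal |(3:ℝ)⁻¹| * (2/3 : ℝ≥0∞) ^ n := by
            gcongr
        _ = (3 : ℝ≥0∞)⁻¹ * (2/3 : ℝ≥0∞) ^ n := by
            congr 1
            rw [abs_of_nonneg (by norm_num : (0:ℝ) ≤ 3⁻¹)]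
            rw [ENNReal.ofReal_inv_of_pos (by norm_num)]
            norm_num
    have h2 : volume ((fun x ↦ (2 + x) / 3) '' preCantorSet n) ≤ (3 : ℝ≥0∞)⁻¹ * (2/3 : ℝ≥0∞) ^ n := by
      have : (fun x ↦ (2 + x) / 3) '' preCantorSet n
          = (2/3 : ℝ) +ᵥ ((· / 3) '' preCantorSet n) := by
        ext x
        simp only [Set.mem_vadd_set, Set.mem_image, vadd_eq_add]
        constructor
        · rintro ⟨y, hy, rfl⟩; exact ⟨y/3, ⟨y, hy, rfl⟩, by ring⟩
        · rintro ⟨z, ⟨y, hy, rfl⟩, rfl⟩; exact ⟨y, hy, by ring⟩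
      rw [this, measure_vadd]
      exact h1
    calc volume (preCantorSet (n+1))
        ≤ volume ((· / 3) '' preCantorSet n) + volume ((fun x ↦ (2 + x) / 3) '' preCantorSet n) :=
          measure_union_le _ _
      _ ≤ (3 : ℝ≥0∞)⁻¹ * (2/3 : ℝ≥0∞) ^ n + (3 : ℝ≥0∞)⁻¹ * (2/3 : ℝ≥0∞) ^ n := add_le_add h1 h2
      _ = (2/3 : ℝ≥0∞) ^ (n+1) := by
          rw [← two_mul, pow_succ,
            show (2/3 : ℝ≥0∞) = 3⁻¹ * 2 from ENNReal.div_eq_inv_mul ..]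
          ring

lemma volume_cantorSet : volume cantorSet = 0 := by
  have h : ∀ m : ℕ, volume cantorSet ≤ (2/3 : ℝ≥0∞) ^ m :=
    fun m ↦ le_trans (measure_mono (Set.iInter_subset _ m)) (volume_preCantorSet m)
  have ht : Filter.Tendsto (fun m : ℕ ↦ (2/3 : ℝ≥0∞) ^ m) atTop (nhds 0) :=
    ENNReal.tendsto_pow_atTop_nhds_zero_of_lt_one (by
      rw [ENNReal.div_lt_iff (by norm_num) (by norm_num)]; norm_num)
  exact le_antisymm (ge_of_tendsto ht (Filter.Eventually.of_forall h)) zero_le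


/-- The standard embedding of the Cantor space into the ternary Cantor set. -/
def h0 : (ℕ → Bool) → ℝ := fun a ↦ 2/3 * Cardinal.cantorFunction 3⁻¹ a

lemma h0_injective : Function.Injective h0 := fun a b hab ↦
  Cardinal.cantorFunction_injective (by norm_num) (by norm_num)
    (mul_left_cancel₀ (by norm_num : (2/3 : ℝ) ≠ 0) hab)

lemma cantorFunction_nonneg (a : ℕ → Bool) : 0 ≤ Cardinal.cantorFunction 3⁻¹ a :=
  tsum_nonneg fun n ↦ Cardinal.cantorFunctionAux_nonneg (by norm_num)

lemma cantorFunction_le_32 (a : ℕ → Bool) : Cardinal.cantorFunction 3⁻¹ a ≤ 3/2 := by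
  have h1 : Cardinal.cantorFunction 3⁻¹ a ≤ Cardinal.cantorFunction 3⁻¹ (fun _ ↦ true) :=
    Cardinal.cantorFunction_le (by norm_num) (by norm_num) (fun n _ ↦ rfl)
  have h2 : Cardinal.cantorFunction 3⁻¹ (fun _ ↦ true) = 3/2 := by
    unfold Cardinal.cantorFunction
    have : ∀ n : ℕ, Cardinal.cantorFunctionAux 3⁻¹ (fun _ ↦ true) n = (3⁻¹ : ℝ) ^ n :=
      fun n ↦ Cardinal.cantorFunctionAux_true rfl
    rw [tsum_congr this, tsum_geometric_of_lt_one (by norm_num) (by norm_num)]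
    norm_num
  linarith

lemma h0_succ (a : ℕ → Bool) :
    h0 a = (if a 0 then 2 else 0) / 3 + h0 (fun n ↦ a (n+1)) / 3 := by
  unfold h0
  rw [Cardinal.cantorFunction_succ _ (by norm_num) (by norm_num)]
  cases h : a 0 <;> simp [h] <;> ring

lemma h0_mem_preCantorSet (n : ℕ) (a : ℕ → Bool) : h0 a ∈ preCantorSet n := by
  induction n generalizing a with
  | zero =>
    have h1 := cantorFunction_nonneg a
    have h2 := cantorFunction_le_32 a
    constructor
    · unfold h0; positivity
    · unfold h0; linarith
  | succ n ih =>
    rw [h0_succ a]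
    cases h : a 0 with
    | false =>
      exact Or.inl ⟨h0 (fun n ↦ a (n+1)), ih _, by simp [h]⟩
    | true =>
      exact Or.inr ⟨h0 (fun n ↦ a (n+1)), ih _, by simp [h]; ring⟩

lemma h0_mem_cantorSet (a : ℕ → Bool) : h0 a ∈ cantorSet :=
  Set.mem_iInter.mpr fun n ↦ h0_mem_preCantorSet n a

lemma volume_box {n : ℕ} (a b : EuclideanSpace ℝ (Fin n)) (hab : ∀ ν, a ν ≤ b ν) :
    (volume (box a b)).toReal = ∏ ν, (b ν - a ν) := by
  have hbox : box a b = (MeasurableEquiv.toLp 2 (Fin n → ℝ)).symm ⁻¹'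
      (Set.univ.pi fun ν ↦ Set.Icc (a ν) (b ν)) := by
    ext x
    simp [box, Set.mem_univ_pi, Set.mem_Icc, MeasurableEquiv.toLp_symm_apply, Pi.le_def, forall_and]
  rw [hbox, (EuclideanSpace.volume_preserving_symm_measurableEquiv_toLp (Fin n)).measure_preimage
    ((MeasurableSet.univ_pi fun ν ↦ measurableSet_Icc).nullMeasurableSet),
    volume_pi_pi]
  simp only [Real.volume_Icc]
  rw [ENNReal.toReal_prod]
  exact Finset.prod_congr rfl fun ν _ ↦ ENNReal.toReal_ofReal (sub_nonneg.2 (hab ν))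

lemma sides_eq {n : ℕ} (hn : 0 < n) (a b : EuclideanSpace ℝ (Fin n)) (hab : ∀ ν, a ν ≤ b ν)
    (hreg : (⨆ ν, |a ν - b ν|) ^ n ≤ (volume (box a b)).toReal) (μ ν : Fin n) :
    b μ - a μ = b ν - a ν := by
  haveI : NeZero n := ⟨hn.ne'⟩
  set M : ℝ := ⨆ ν, |a ν - b ν| with hM
  have habs : ∀ ν, |a ν - b ν| = b ν - a ν := fun ν ↦ by
    rw [abs_sub_comm, abs_of_nonneg (sub_nonneg.2 (hab ν))]
  have hle : ∀ ν, b ν - a ν ≤ M := fun ν ↦ by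
    rw [← habs ν]; exact le_ciSup (Set.Finite.bddAbove (Set.finite_range fun ν ↦ |a ν - b ν|)) ν
  have hMnn : 0 ≤ M := le_trans (sub_nonneg.2 (hab 0)) (hle 0)
  rw [volume_box a b hab] at hreg
  -- every side equals M
  have key : ∀ μ, b μ - a μ = M := by
    intro μ
    by_contra hne
    have hlt : b μ - a μ < M := lt_of_le_of_ne (hle μ) hne
    have hMpos : 0 < M := lt_of_le_of_lt (sub_nonneg.2 (hab μ)) hlt
    have h1 : ∏ ν, (b ν - a ν) < M ^ n := by
      calc ∏ ν, (b ν - a ν)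
          = (b μ - a μ) * ∏ ν ∈ Finset.univ.erase μ, (b ν - a ν) :=
            (Finset.mul_prod_erase _ _ (Finset.mem_univ μ)).symm
        _ ≤ (b μ - a μ) * M ^ (Finset.univ.erase μ).card := by
            apply mul_le_mul_of_nonneg_left _ (sub_nonneg.2 (hab μ))
            calc ∏ ν ∈ Finset.univ.erase μ, (b ν - a ν)
                ≤ ∏ _ν ∈ Finset.univ.erase μ, M :=
                  Finset.prod_le_prod (fun ν _ ↦ sub_nonneg.2 (hab ν)) (fun ν _ ↦ hle ν)
              _ = M ^ (Finset.univ.erase μ).card := by rw [Finset.prod_const]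
        _ < M * M ^ (Finset.univ.erase μ).card :=
            mul_lt_mul_of_pos_right hlt (pow_pos hMpos _)
        _ = M ^ n := by
            rw [← pow_succ']
            congr 1
            rw [Finset.card_erase_of_mem (Finset.mem_univ μ), Finset.card_univ,
              Fintype.card_fin]
            omega
    exact absurd hreg (not_le.2 h1)
  rw [key μ, key ν]

lemma volume_slab {n : ℕ} [NeZero n] (hn : 1 < n) :
    volume {x : EuclideanSpace ℝ (Fin n) | x 1 - x 0 ∈ cantorSet} = 0 := by
  have h10 : ¬((0 : Fin n) = 1) := by
    intro h
    have h1 : ((1 : Fin n) : ℕ) = 1 := by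
      rw [Fin.val_one']; exact Nat.mod_eq_of_lt hn
    rw [← h] at h1
    simp at h1
  have slab0 : volume {y : EuclideanSpace ℝ (Fin n) | y 1 ∈ cantorSet} = 0 := by
    have hset : {y : EuclideanSpace ℝ (Fin n) | y 1 ∈ cantorSet} =
        (MeasurableEquiv.toLp 2 (Fin n → ℝ)).symm ⁻¹'
        (Set.univ.pi fun ν ↦ if ν = 1 then cantorSet else Set.univ) := by
      ext y
      simp only [Set.mem_setOf_eq, Set.mem_preimage, Set.mem_univ_pi]
      constructor
      · intro hy ν
        by_cases h : ν = 1 <;> simp [h, MeasurableEquiv.toLp_symm_apply, hy]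
      · intro hy
        have := hy 1
        simpa [MeasurableEquiv.toLp_symm_apply] using this
    have hmeas : MeasurableSet (Set.univ.pi
        fun ν : Fin n ↦ if ν = 1 then cantorSet else Set.univ) := by
      apply MeasurableSet.univ_pi
      intro ν
      by_cases h : ν = 1 <;> simp [h, isClosed_cantorSet.measurableSet]
    rw [hset, (EuclideanSpace.volume_preserving_symm_measurableEquiv_toLp (Fin n)).measure_preimage
      hmeas.nullMeasurableSet, volume_pi_pi]
    apply Finset.prod_eq_zero (Finset.mem_univ (1 : Fin n))
    simp [volume_cantorSet]
  set s : EuclideanSpace ℝ (Fin n) := EuclideanSpace.single 1 (1 : ℝ) with hs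
  have hs0 : s 0 = 0 := by simp [hs, EuclideanSpace.single_apply, h10]
  have hs1 : s 1 = 1 := by simp [hs, EuclideanSpace.single_apply]
  let φ : EuclideanSpace ℝ (Fin n) ≃ₗ[ℝ] EuclideanSpace ℝ (Fin n) :=
    { toFun := fun x ↦ x - x 0 • s
      map_add' := fun x y ↦ by
        show x + y - (x + y) 0 • s = x - x 0 • s + (y - y 0 • s)
        rw [show (x + y) 0 = x 0 + y 0 from rfl, add_smul]
        abel
      map_smul' := fun c x ↦ by
        show c • x - (c • x) 0 • s = c • (x - x 0 • s)
        rw [show (c • x) 0 = c * x 0 from rfl, smul_sub, smul_smul]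
      invFun := fun x ↦ x + x 0 • s
      left_inv := fun x ↦ by
        show x - x 0 • s + (x - x 0 • s) 0 • s = x
        rw [show (x - x 0 • s) 0 = x 0 - x 0 * s 0 from rfl, hs0]
        simp
      right_inv := fun x ↦ by
        show x + x 0 • s - (x + x 0 • s) 0 • s = x
        rw [show (x + x 0 • s) 0 = x 0 + x 0 * s 0 from rfl, hs0]
        simp }
  have hpre : {x : EuclideanSpace ℝ (Fin n) | x 1 - x 0 ∈ cantorSet} =
      φ ⁻¹' {y : EuclideanSpace ℝ (Fin n) | y 1 ∈ cantorSet} := by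
    ext x
    have : (φ x) 1 = x 1 - x 0 := by
      show x 1 - x 0 * s 1 = x 1 - x 0
      rw [hs1, mul_one]
    simp [Set.mem_preimage, this]
  rw [hpre, Measure.addHaar_preimage_linearEquiv volume φ, slab0, mul_zero]

lemma card_le {l : ℕ} (hl : 1 ≤ l) :
    Cardinal.mk (EuclideanSpace ℝ (Fin l)) ≤ Cardinal.mk (ℕ → Bool) := by
  have h1 : Cardinal.mk (ℕ → Bool) = Cardinal.continuum := by
    rw [Cardinal.mk_arrow]
    simp [Cardinal.mk_bool, Cardinal.mk_nat, Cardinal.two_power_aleph0]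
  have h2 : Cardinal.mk (EuclideanSpace ℝ (Fin l)) = Cardinal.mk (Fin l → ℝ) :=
    Cardinal.mk_congr (WithLp.equiv 2 _)
  have h3 : Cardinal.mk (Fin l → ℝ) = Cardinal.continuum := by
    rw [Cardinal.mk_arrow]
    simp only [Cardinal.mk_real, Cardinal.mk_fin, Cardinal.lift_continuum,
      Cardinal.lift_natCast]
    exact Cardinal.power_nat_eq Cardinal.aleph0_le_continuum hl
  rw [h1, h2, h3]

/-- For integers `n > 1` and `l ≥ 1`, there exist a function `f ∈ 1-AC(ℝⁿ,ℝˡ)` which is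
differentiable almost everywhere, and a set `U ⊆ ℝⁿ` with `ℒⁿ(U) = 0` and
`ℒˡ(f(U)) > 0`; in particular `f` fails the Luzin (N) property. -/
theorem exists_oneAC_differentiable_ae_not_luzinN {n l : ℕ} (hn : 1 < n) (hl : 1 ≤ l) :
    ∃ (f : EuclideanSpace ℝ (Fin n) → EuclideanSpace ℝ (Fin l))
      (U : Set (EuclideanSpace ℝ (Fin n))),
      OneAC f ∧ (∀ᵐ x ∂(volume : Measure (EuclideanSpace ℝ (Fin n))), DifferentiableAt ℝ f x) ∧
      volume U = 0 ∧ 0 < volume (f '' U) := by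
  classical
  haveI : NeZero n := ⟨by omega⟩
  have h10 : ¬((0 : Fin n) = 1) := by
    intro h
    have h1 : ((1 : Fin n) : ℕ) = 1 := by
      rw [Fin.val_one']; exact Nat.mod_eq_of_lt hn
    rw [← h] at h1
    simp at h1
  obtain ⟨emb⟩ := Cardinal.le_def _ _ |>.mp (card_le hl)
  set e : EuclideanSpace ℝ (Fin l) → ℝ := fun y ↦ h0 (emb y) with he
  have einj : Function.Injective e := h0_injective.comp emb.injective
  set G : ℝ → EuclideanSpace ℝ (Fin l) :=
    fun t ↦ if t ∈ cantorSet then Function.invFun e t else 0 with hG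
  set f : EuclideanSpace ℝ (Fin n) → EuclideanSpace ℝ (Fin l) :=
    fun x ↦ G (x 1 - x 0) with hf
  set U := {x : EuclideanSpace ℝ (Fin n) | x 1 - x 0 ∈ cantorSet} with hU
  have hproj : Continuous fun x : EuclideanSpace ℝ (Fin n) ↦ x 1 - x 0 :=
    ((EuclideanSpace.proj (1 : Fin n)).continuous).sub
      ((EuclideanSpace.proj (0 : Fin n)).continuous)
  refine ⟨f, U, ?_, ?_, volume_slab hn, ?_⟩
  · -- 1-absolute continuity
    intro ε hε
    refine ⟨1, one_pos, fun k a b hab _ hreg _ ↦ ?_⟩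
    have hzero : ∀ j ∈ Finset.univ, ‖f (b j) - f (a j)‖ ^ n = (0 : ℝ) := by
      intro j _
      have hside : b j 1 - a j 1 = b j 0 - a j 0 :=
        sides_eq (by omega) (a j) (b j) (hab j) (hreg j) 1 0
      have heq : b j 1 - b j 0 = a j 1 - a j 0 := by linarith
      have : f (b j) = f (a j) := by
        show G (b j 1 - b j 0) = G (a j 1 - a j 0)
        rw [heq]
      rw [this, sub_self, norm_zero, zero_pow (by omega : n ≠ 0)]
    rw [Finset.sum_congr rfl hzero, Finset.sum_const, smul_zero]
    exact hε
  · -- a.e. differentiability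
    have hsub : {x : EuclideanSpace ℝ (Fin n) | ¬ DifferentiableAt ℝ f x} ⊆ U := by
      intro x hx
      by_contra hxU
      apply hx
      have hopen : IsOpen {y : EuclideanSpace ℝ (Fin n) | y 1 - y 0 ∈ cantorSetᶜ} :=
        isClosed_cantorSet.isOpen_compl.preimage hproj
      have hmem : x ∈ {y : EuclideanSpace ℝ (Fin n) | y 1 - y 0 ∈ cantorSetᶜ} := hxU
      have hev : f =ᶠ[nhds x] fun _ ↦ (0 : EuclideanSpace ℝ (Fin l)) :=
        Filter.eventuallyEq_of_mem (hopen.mem_nhds hmem) (fun y hy ↦ by show G (y 1 - y 0) = 0; exact if_neg hy)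
      exact (differentiableAt_const (0 : EuclideanSpace ℝ (Fin l))).congr_of_eventuallyEq hev
    rw [MeasureTheory.ae_iff]
    exact measure_mono_null hsub (volume_slab hn)
  · -- image of U has positive measure
    have hsurj : (Set.univ : Set (EuclideanSpace ℝ (Fin l))) ⊆ f '' U := by
      intro y _
      refine ⟨(e y) • EuclideanSpace.single (1 : Fin n) (1 : ℝ), ?_, ?_⟩
      · show (e y) • EuclideanSpace.single (1 : Fin n) (1:ℝ) ∈ U
        have : ((e y) • EuclideanSpace.single (1 : Fin n) (1:ℝ)) 1
            - ((e y) • EuclideanSpace.single (1 : Fin n) (1:ℝ)) 0 = e y := by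
          show e y * EuclideanSpace.single (1 : Fin n) (1:ℝ) 1
            - e y * EuclideanSpace.single (1 : Fin n) (1:ℝ) 0 = e y
          simp [EuclideanSpace.single_apply, h10]
        show _ ∈ cantorSet
        rw [this]
        exact h0_mem_cantorSet _
      · show G _ = y
        have hc : ((e y) • EuclideanSpace.single (1 : Fin n) (1:ℝ)) 1
            - ((e y) • EuclideanSpace.single (1 : Fin n) (1:ℝ)) 0 = e y := by
          show e y * EuclideanSpace.single (1 : Fin n) (1:ℝ) 1
            - e y * EuclideanSpace.single (1 : Fin n) (1:ℝ) 0 = e y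
          simp [EuclideanSpace.single_apply, h10]
        rw [hc, hG]
        simp only [h0_mem_cantorSet (emb y), he, if_pos]
        exact Function.leftInverse_invFun einj y
    have hpos : (0 : ℝ≥0∞) < volume (Set.univ : Set (EuclideanSpace ℝ (Fin l))) :=
      isOpen_univ.measure_pos volume Set.univ_nonempty
    exact lt_of_lt_of_le hpos (measure_mono hsurj)
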